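/- Let n ≥ 5 and let x_0, x_1, …, x_{n−1} be n distinct elements. Then the set of quartets { x_i x_{i+1} | x_{i+2} x_{i+3} : 0 ≤ i ≤ n−1 } (indices modulo n) is incompatible, i.e., no tree contains all of these quartets. -/

import Mathlib

open SimpleGraph

namespace LeafPaper

/-- A leaf of a graph: a vertex with exactly one neighbor. -/
def IsLeaf {W : Type} (T : SimpleGraph W) (w : W) : Prop := ∃! u, T.Adj w u

/-- The edge list of the (unique, if `T` is a tree) path between `x` and `y`. -/
noncomputable def treePathEdges {W : Type} (T : SimpleGraph W) (x y : W) :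
    List (Sym2 W) := by
  classical
  exact if h : T.Reachable x y then (Classical.choice h).bypass.edges else []

/-- The weighted distance between `x` and `y` in a tree `T` with edge weighting `f`:
the sum of the weights of the edges on the (unique) path between `x` and `y`. -/
noncomputable def wdist {W : Type} (T : SimpleGraph W) (f : Sym2 W → ℕ) (x y : W) : ℕ :=
  ((treePathEdges T x y).map f).sum

/-- `(T, f)` is a leaf root of `G` with threshold `k`, where `ι` identifies the
vertices of `G` with the leaves of `T`. -/
def IsLeafRoot {V W : Type} (G : SimpleGraph V) (T : SimpleGraph W) (ι : V → W)
    (f : Sym2 W → ℕ) (k : ℕ) : Prop :=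
  T.IsTree ∧ Function.Injective ι ∧ (∀ w : W, IsLeaf T w ↔ w ∈ Set.range ι) ∧
    (∀ e ∈ T.edgeSet, 0 < f e) ∧
    ∀ u v : V, u ≠ v → (G.Adj u v ↔ wdist T f (ι u) (ι v) ≤ k)

/-- An unweighted tree `T` is an unweighted leaf root of `G` if some positive
integer weighting of its edges makes it a leaf root of `G`. -/
def IsUnweightedLeafRoot {V W : Type} (G : SimpleGraph V) (T : SimpleGraph W)
    (ι : V → W) : Prop :=
  ∃ (f : Sym2 W → ℕ) (k : ℕ), IsLeafRoot G T ι f k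

/-- `G` is a leaf power: there are a finite tree `T` whose leaf set is exactly `V(G)`
and a positive threshold `k` such that distinct vertices are adjacent in `G` iff their
tree distance is at most `k`. -/
def IsLeafPower {V : Type} (G : SimpleGraph V) : Prop :=
  ∃ (W : Type) (T : SimpleGraph W) (ι : V → W) (k : ℕ),
    Finite W ∧ T.IsTree ∧ Function.Injective ι ∧
      (∀ w : W, IsLeaf T w ↔ w ∈ Set.range ι) ∧ 0 < k ∧
      ∀ u v : V, u ≠ v → (G.Adj u v ↔ T.dist (ι u) (ι v) ≤ k)

/-- An alternating cycle `(x 0, y 0, x 1, y 1, …)` of `G`: `2c` distinct vertices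
such that `x i y i` is an edge and `y i x (i+1)` is a non-edge (indices mod `c`). -/
def IsAltCycle {V : Type} (G : SimpleGraph V) (c : ℕ) (x y : ZMod c → V) : Prop :=
  2 ≤ c ∧ Function.Injective (Sum.elim x y) ∧
    ∀ i : ZMod c, G.Adj (x i) (y i) ∧ ¬ G.Adj (y i) (x (i + 1))

/-- The weighted tree `(T, f)` satisfies the alternating cycle given by `x, y`
with threshold `k`. -/
def Satisfies {V W : Type} (T : SimpleGraph W) (f : Sym2 W → ℕ) (ι : V → W)
    (c : ℕ) (x y : ZMod c → V) (k : ℕ) : Prop :=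
  ∀ i : ZMod c, wdist T f (ι (x i)) (ι (y i)) ≤ k ∧
    k < wdist T f (ι (y i)) (ι (x (i + 1)))

/-- The unweighted tree `T` can satisfy the alternating cycle given by `x, y`. -/
def CanSatisfy {V W : Type} (T : SimpleGraph W) (ι : V → W) (c : ℕ)
    (x y : ZMod c → V) : Prop :=
  ∃ (f : Sym2 W → ℕ) (k : ℕ), (∀ e ∈ T.edgeSet, 0 < f e) ∧ Satisfies T f ι c x y k

/-- `T` contains the quartet `ab|cd`: the four vertices are distinct leaves of `T` and
the path between `a` and `b` is vertex-disjoint from the path between `c` and `d`. -/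
def ContainsQuartet {W : Type} (T : SimpleGraph W) (a b c d : W) : Prop :=
  IsLeaf T a ∧ IsLeaf T b ∧ IsLeaf T c ∧ IsLeaf T d ∧ a ≠ b ∧ c ≠ d ∧
    ∀ (p : T.Walk a b) (p' : T.Walk c d), p.IsPath → p'.IsPath →
      ∀ w : W, w ∈ p.support → w ∉ p'.support


section Statement10Helpers

variable {W : Type} {T : SimpleGraph W}


lemma getVert_one_mem {a b : W} (w : T.Walk a b) (h : 1 ≤ w.length) :
    w.getVert 1 ∈ w.support := by
  cases w with
  | nil => simp at h
  | cons hadj pp =>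
    rw [Walk.getVert_cons _ _ one_ne_zero, Nat.sub_self, Walk.getVert_zero]
    simp [Walk.support_cons, Walk.start_mem_support]

lemma getVert_one_ne_start {a b : W} (w : T.Walk a b) (hw : w.IsPath) (h : 1 ≤ w.length) :
    w.getVert 1 ≠ a := by
  cases w with
  | nil => simp at h
  | cons hadj pp =>
    rw [Walk.getVert_cons _ _ one_ne_zero, Nat.sub_self, Walk.getVert_zero]
    rcases (Walk.cons_isPath_iff _ _).mp hw with ⟨-, ha⟩
    exact fun hv => ha (hv ▸ pp.start_mem_support)

/-- the vertex just before the end of a walk -/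
def pen {a b : W} (w : T.Walk a b) : W := w.reverse.getVert 1

lemma pen_mem {a b : W} (w : T.Walk a b) (h : 1 ≤ w.length) : pen w ∈ w.support := by
  have := getVert_one_mem w.reverse (by rwa [Walk.length_reverse])
  rwa [Walk.support_reverse, List.mem_reverse] at this

lemma pen_ne_end {a b : W} (w : T.Walk a b) (hw : w.IsPath) (h : 1 ≤ w.length) : pen w ≠ b :=
  getVert_one_ne_start w.reverse hw.reverse (by rwa [Walk.length_reverse])

lemma pen_append {a b c : W} (p : T.Walk a b) (q : T.Walk b c) (h : 1 ≤ q.length) :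
    pen (p.append q) = pen q := by
  unfold pen
  rw [Walk.reverse_append, Walk.getVert_append]
  rcases h.lt_or_eq with h1 | h1
  · rw [if_pos (by rwa [Walk.length_reverse])]
  · rw [if_neg (by rw [Walk.length_reverse, ← h1]; omega)]
    rw [Walk.length_reverse, ← h1]
    rw [Walk.getVert_reverse, Walk.getVert_reverse, ← h1]
    simp [Walk.getVert_zero]

lemma getVert_one_takeUntil [DecidableEq W] {a b z : W} (p : T.Walk a b) (hz : z ∈ p.support)
    (hne : a ≠ z) : (p.takeUntil z hz).getVert 1 = p.getVert 1 := by
  cases p with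
  | nil => exact absurd (Walk.mem_support_nil_iff.mp hz) (fun h => hne h.symm)
  | cons hadj pp =>
    rw [show (Walk.cons hadj pp).takeUntil z hz =
      Walk.cons hadj (pp.takeUntil z (by
        rw [Walk.support_cons] at hz
        rcases List.mem_cons.mp hz with h | h
        · exact absurd h.symm hne
        · exact h)) from ?_]
    · rw [Walk.getVert_cons _ _ one_ne_zero, Walk.getVert_cons _ _ one_ne_zero, Nat.sub_self,
        Walk.getVert_zero, Walk.getVert_zero]
    · simp only [Walk.takeUntil]
      rw [dif_neg hne]

lemma isPath_append {a b c : W} {p : T.Walk a b} {q : T.Walk b c} (hp : p.IsPath) (hq : q.IsPath)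
    (h : ∀ z, z ∈ p.support → z ∈ q.support → z = b) : (p.append q).IsPath := by
  rw [Walk.isPath_def, Walk.support_append]
  refine List.Nodup.append hp.support_nodup
    (hq.support_nodup.sublist (List.tail_sublist _)) ?_
  intro z hzp hzq
  have hz := h z hzp (List.mem_of_mem_tail hzq)
  subst hz
  have hnd := hq.support_nodup
  rw [Walk.support_eq_cons] at hnd
  exact (List.nodup_cons.mp hnd).1 hzq

lemma length_pos_of_mem_ne {b c z : W} {q : T.Walk b c} (hz : z ∈ q.support) (h : z ≠ b) :
    1 ≤ q.length := by
  cases q with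
  | nil => exact absurd (Walk.mem_support_nil_iff.mp hz) h
  | cons hadj pp => simp [Walk.length_cons]

lemma isPath_append_pen [DecidableEq W] (hT : T.IsTree) {a b c : W} {p : T.Walk a b}
    {q : T.Walk b c} (hp : p.IsPath) (hq : q.IsPath) (hl : 1 ≤ p.length)
    (hpen : pen p ∉ q.support) : (p.append q).IsPath := by
  refine isPath_append hp hq ?_
  intro z hzp hzq
  by_contra hzb
  have hzrev : z ∈ p.reverse.support := by rwa [Walk.support_reverse, List.mem_reverse]
  have h1 : (p.reverse.takeUntil z hzrev).IsPath := hp.reverse.takeUntil _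
  have h2 : (q.takeUntil z hzq).IsPath := hq.takeUntil _
  have heq := (hT.existsUnique_path b z).unique h1 h2
  have e1 : (p.reverse.takeUntil z hzrev).getVert 1 = p.reverse.getVert 1 :=
    getVert_one_takeUntil _ _ (fun h => hzb h.symm)
  have e2 : (q.takeUntil z hzq).getVert 1 = q.getVert 1 :=
    getVert_one_takeUntil _ _ (fun h => hzb h.symm)
  have : pen p = q.getVert 1 := by rw [pen, ← e1, heq, e2]
  apply hpen
  rw [this]
  exact getVert_one_mem _ (length_pos_of_mem_ne hzq (fun h => hzb h))

lemma exists_split (Pr : W → Prop) [DecidablePred Pr] :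
    ∀ {a b : W} (p : T.Walk a b), Pr b →
      ∃ (t : W) (q : T.Walk a t) (r : T.Walk t b), Pr t ∧ q.append r = p ∧
        ∀ w ∈ q.support, Pr w → w = t := by
  intro a b p
  induction p with
  | nil => exact fun h => ⟨_, Walk.nil, Walk.nil, h, rfl, by intro w hw _; simpa using hw⟩
  | @cons a v b hadj pp ih =>
    intro hb
    by_cases ha : Pr a
    · refine ⟨a, Walk.nil, Walk.cons hadj pp, ha, rfl, ?_⟩
      intro w hw _
      simpa using hw
    · obtain ⟨t, q, r, h1, h2, h3⟩ := ih hb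
      refine ⟨t, Walk.cons hadj q, r, h1, by rw [Walk.cons_append, h2], ?_⟩
      intro w hw hPw
      rw [Walk.support_cons] at hw
      rcases List.mem_cons.mp hw with h | h
      · exact absurd (h ▸ hPw) ha
      · exact h3 w h hPw


end Statement10Helpers

/-- for `n ≥ 5` and `n` distinct elements `x 0, …, x (n-1)`, no tree
contains all the quartets `x i x (i+1) | x (i+2) x (i+3)` (indices mod `n`). -/
theorem stmt_10 {α : Type} (n : ℕ) (hn : 5 ≤ n) (x : ZMod n → α)
    (hx : Function.Injective x) :
    ∀ (W : Type) (T : SimpleGraph W), T.IsTree → ∀ ι : α → W, Function.Injective ι →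
      ¬ ∀ i : ZMod n,
          ContainsQuartet T (ι (x i)) (ι (x (i + 1))) (ι (x (i + 2))) (ι (x (i + 3))) := by
  intro W T hT ι hι H
  classical
  -- choose the tree paths between consecutive leaves
  have hpath : ∀ i : ZMod n, ∃ p : T.Walk (ι (x i)) (ι (x (i+1))), p.IsPath := fun i =>
    (hT.existsUnique_path _ _).exists
  choose p hp using hpath
  -- disjointness of paths two apart
  have Hdisj : ∀ i : ZMod n, ∀ w ∈ (p i).support, w ∉ (p (i+2)).support := by
    intro i w hw hw'
    have e : i + 2 + 1 = i + 3 := by ring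
    have hq := (H i).2.2.2.2.2.2
    refine hq (p i) ((p (i+2)).copy rfl (by rw [e])) (hp i)
      ((Walk.isPath_copy _ _ _).mpr (hp _)) w hw ?_
    rw [Walk.support_copy]
    exact hw'
  -- split each path at the first vertex lying on the next path
  have hsplit : ∀ i : ZMod n, ∃ (t : W) (q : T.Walk (ι (x i)) t)
      (r : T.Walk t (ι (x (i+1)))),
      t ∈ (p (i+1)).support ∧ q.append r = p i ∧
      ∀ w ∈ q.support, w ∈ (p (i+1)).support → w = t := fun i =>
    exists_split (· ∈ (p (i+1)).support) (p i) (p (i+1)).start_mem_support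
  choose t q r ht1 hqr hqmin using hsplit
  have hq_sub : ∀ i, ∀ w ∈ (q i).support, w ∈ (p i).support := by
    intro i w hw
    rw [← hqr i, Walk.mem_support_append_iff]
    exact Or.inl hw
  have ht0 : ∀ i, t i ∈ (p i).support := fun i => hq_sub i _ (q i).end_mem_support
  have happ : ∀ i, ((q i).append (r i)).IsPath := by
    intro i; rw [hqr i]; exact hp i
  have hqpath : ∀ i, (q i).IsPath := fun i => (happ i).of_append_left
  have hrpath : ∀ i, (r i).IsPath := fun i => (happ i).of_append_right
  -- the suffix r i lies inside the next path
  have hr_sub : ∀ i, ∀ w ∈ (r i).support, w ∈ (p (i+1)).support := by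
    intro i
    have h1 : ((r i).reverse).IsPath := (hrpath i).reverse
    have h2 : ((p (i+1)).takeUntil (t i) (ht1 i)).IsPath := (hp (i+1)).takeUntil _
    have heq := (hT.existsUnique_path (ι (x (i+1))) (t i)).unique h2 h1
    intro w hw
    have hw2 : w ∈ (r i).reverse.support := by rwa [Walk.support_reverse, List.mem_reverse]
    rw [← heq] at hw2
    exact (p (i+1)).support_takeUntil_subset _ hw2
  -- t i lies on q (i+1)
  have hmem : ∀ i : ZMod n, t i ∈ (q (i+1)).support := by
    intro i
    have h := ht1 i
    rw [← hqr (i+1), Walk.mem_support_append_iff] at h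
    rcases h with h | h
    · exact h
    · exfalso
      have h2 := hr_sub (i+1) _ h
      have e : i + 1 + 1 = i + 2 := by ring
      rw [e] at h2
      exact Hdisj i _ (ht0 i) h2
  have hne : ∀ i : ZMod n, t i ≠ t (i+1) := by
    intro i heq
    have h1 := ht1 (i+1)
    have e : i + 1 + 1 = i + 2 := by ring
    rw [e] at h1
    exact Hdisj i _ (ht0 i) (heq ▸ h1)
  -- the reduced segments
  let Seg : ∀ i : ZMod n, T.Walk (t i) (t (i+1)) := fun i => (q (i+1)).dropUntil (t i) (hmem i)
  have hSegPath : ∀ i, (Seg i).IsPath := fun i => (hqpath (i+1)).dropUntil _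
  have hSeg_sub : ∀ i, ∀ w ∈ (Seg i).support, w ∈ (q (i+1)).support := fun i w hw =>
    (q (i+1)).support_dropUntil_subset _ hw
  have hSegLen : ∀ i, 1 ≤ (Seg i).length := by
    intro i
    by_contra h
    push_neg at h
    have h0 : (Seg i).length = 0 := by omega
    exact hne i (Walk.eq_of_length_eq_zero h0)
  have hcons : ∀ i : ZMod n, ∀ w ∈ (Seg i).support, w ∈ (Seg (i+1)).support → w = t (i+1) := by
    intro i w hw hw2
    have e : i + 1 + 1 = i + 2 := by ring
    have h1 := hqmin (i+1) w (hSeg_sub i w hw)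
    rw [e] at h1
    refine h1 ?_
    have h2 := hq_sub (i+1+1) w (hSeg_sub (i+1) w hw2)
    rwa [e] at h2
  -- reindex over ℕ
  have hn0 : 0 < n := by omega
  let s : ℕ → W := fun k => t (k : ZMod n)
  have ecast : ∀ k : ℕ, ((k+1 : ℕ) : ZMod n) = (k : ZMod n) + 1 := by
    intro k; push_cast; ring
  let SegN : ∀ k : ℕ, T.Walk (s k) (s (k+1)) := fun k =>
    (Seg (k : ZMod n)).copy rfl (congrArg t (ecast k).symm)
  have hSegNpath : ∀ k, (SegN k).IsPath := fun k => (Walk.isPath_copy _ _ _).mpr (hSegPath _)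
  have hSegNlen : ∀ k, 1 ≤ (SegN k).length := fun k => by
    show 1 ≤ ((Seg ((k : ℕ) : ZMod n)).copy rfl _).length
    rw [Walk.length_copy]; exact hSegLen _
  have hconsN : ∀ k : ℕ, ∀ w ∈ (SegN k).support, w ∈ (SegN (k+1)).support → w = s (k+1) := by
    intro k w hw hw2
    have hw' : w ∈ (Seg ((k:ℕ) : ZMod n)).support := by
      rwa [show (SegN k).support = (Seg ((k:ℕ) : ZMod n)).support from Walk.support_copy _ _ _] at hw
    have hw2' : w ∈ (Seg (((k+1):ℕ) : ZMod n)).support := by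
      rwa [show (SegN (k+1)).support = (Seg (((k+1):ℕ) : ZMod n)).support from
        Walk.support_copy _ _ _] at hw2
    rw [ecast k] at hw2'
    show w = t (((k+1):ℕ) : ZMod n)
    rw [ecast k]
    exact hcons _ w hw' hw2'
  -- build the concatenated walk
  let Φ : ∀ k : ℕ, T.Walk (s 0) (s (k+1)) := fun k =>
    Nat.rec (SegN 0) (fun k ih => ih.append (SegN (k+1))) k
  have main : ∀ k : ℕ, (Φ k).IsPath ∧ pen (Φ k) = pen (SegN k) ∧ k + 1 ≤ (Φ k).length := by
    intro k
    induction k with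
    | zero => exact ⟨hSegNpath 0, rfl, hSegNlen 0⟩
    | succ k ih =>
      obtain ⟨ih1, ih2, ih3⟩ := ih
      have hpen_mem : pen (Φ k) ∈ (SegN k).support := by
        rw [ih2]; exact pen_mem _ (hSegNlen k)
      have hpen_ne : pen (Φ k) ≠ s (k+1) := by
        rw [ih2]; exact pen_ne_end _ (hSegNpath k) (hSegNlen k)
      have hnotin : pen (Φ k) ∉ (SegN (k+1)).support := fun hmem' =>
        hpen_ne (hconsN k _ hpen_mem hmem')
      have hΦlen : 1 ≤ (Φ k).length := le_trans (by omega) ih3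
      have hpath : ((Φ k).append (SegN (k+1))).IsPath :=
        isPath_append_pen hT ih1 (hSegNpath (k+1)) hΦlen hnotin
      refine ⟨hpath, ?_, ?_⟩
      · show pen ((Φ k).append (SegN (k+1))) = _
        exact pen_append _ _ (hSegNlen (k+1))
      · show k + 1 + 1 ≤ ((Φ k).append (SegN (k+1))).length
        rw [Walk.length_append]
        have := hSegNlen (k+1)
        omega
  obtain ⟨hP, -, hL⟩ := main (n - 1)
  have hcast0 : ((n - 1 + 1 : ℕ) : ZMod n) = ((0 : ℕ) : ZMod n) := by
    rw [Nat.sub_add_cancel (by omega : 1 ≤ n), ZMod.natCast_self, Nat.cast_zero]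
  have hs : s (n - 1 + 1) = s 0 := congrArg t hcast0
  have hψ : ((Φ (n-1)).copy rfl hs).IsPath := (Walk.isPath_copy _ _ _).mpr hP
  have hnil := Walk.isPath_iff_eq_nil.mp hψ
  have hlen : ((Φ (n-1)).copy rfl hs).length = (Φ (n-1)).length := Walk.length_copy _ _ _
  rw [hnil] at hlen
  simp only [Walk.length_nil] at hlen
  omega


end LeafPaper
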